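/- arXiv:1912.10682 — 3 statements merged into one kernel-verified Lean document; each statement's English description precedes it below -/
import Mathlib

section
/- Let A and B be densely defined unbounded linear operators on a Hilbert space H with a common domain D = dom(A) = dom(B). Assume: (i) for all ξ, η ∈ D, ⟨Aξ, Bη⟩ = 0 (the ranges of A and B are mutually orthogonal); (ii) there exist orthogonal projections p, q on H with pq = 0, p(D) ⊆ D, q(D) ⊆ D, and for all ξ ∈ D, Aξ = A(pξ) and Bξ = B(qξ). Then A + B (with domain D) is closable if and only if both A and B are closable. -/
open Filter Topology

/-- A densely defined operator is closable (preclosed) if `ξₙ → 0` and `T ξₙ → η`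
imply `η = 0`. -/
def SeqClosable {H H' : Type*} [NormedAddCommGroup H] [NormedSpace ℂ H]
    [NormedAddCommGroup H'] [NormedSpace ℂ H']
    (D : Submodule ℂ H) (T : D →ₗ[ℂ] H') : Prop :=
  ∀ (ξ : ℕ → D) (η : H'),
    Tendsto (fun n => ((ξ n : H))) atTop (𝓝 0) →
    Tendsto (fun n => T (ξ n)) atTop (𝓝 η) → η = 0

/-- If `A, B` have a common dense domain `D`, mutually orthogonal ranges, and there are
mutually orthogonal projections `p, q` with `A ⊆ Ap` and `B ⊆ Bq`, then `A + B` is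
closable iff both `A` and `B` are. -/
theorem stmt_9 {H : Type*} [NormedAddCommGroup H] [InnerProductSpace ℂ H] [CompleteSpace H]
    (D : Submodule ℂ H) (hD : Dense (D : Set H))
    (A B : D →ₗ[ℂ] H)
    (horth : ∀ ξ η : D, (inner ℂ (A ξ) (B η) : ℂ) = 0)
    (p q : H →L[ℂ] H)
    (hp : IsSelfAdjoint p) (hq : IsSelfAdjoint q)
    (hpidem : p.comp p = p) (hqidem : q.comp q = q)
    (hpq : p.comp q = 0)
    (hpD : ∀ ξ : D, p (ξ : H) ∈ D) (hqD : ∀ ξ : D, q (ξ : H) ∈ D)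
    (hA : ∀ ξ : D, A ξ = A ⟨p (ξ : H), hpD ξ⟩)
    (hB : ∀ ξ : D, B ξ = B ⟨q (ξ : H), hqD ξ⟩) :
    SeqClosable D (A + B) ↔ SeqClosable D A ∧ SeqClosable D B := by
  have hqp : q.comp p = 0 := by
    have h := congrArg star hpq
    have : star (p * q) = star (0 : H →L[ℂ] H) := h
    rw [star_mul, hp.star_eq, hq.star_eq, star_zero] at this
    exact this
  constructor
  · intro hAB
    constructor
    · intro ξ α hξ hT
      set ζ : ℕ → D := fun n => ⟨p (ξ n : H), hpD (ξ n)⟩ with hζdef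
      have hζ0 : Tendsto (fun n => ((ζ n : H))) atTop (𝓝 0) := by
        have := (p.continuous.tendsto 0).comp hξ
        rw [map_zero] at this; exact this
      have heq : ∀ n, (A + B) (ζ n) = A (ξ n) := by
        intro n
        have hBz : B (ζ n) = 0 := by
          have h1 := hB (ζ n)
          have h2 : q ((ζ n : D) : H) = 0 := by
            have : (q.comp p) ((ξ n : H)) = 0 := by rw [hqp]; simp
            simpa using this
          have h3 : (⟨q ((ζ n : D) : H), hqD (ζ n)⟩ : D) = 0 := by
            apply Subtype.ext; simpa using h2
          rw [h1, h3, map_zero]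
        have hAz : A (ζ n) = A (ξ n) := (hA (ξ n)).symm
        simp [LinearMap.add_apply, hAz, hBz]
      have hT' : Tendsto (fun n => (A + B) (ζ n)) atTop (𝓝 α) := by
        simpa [heq] using hT
      exact hAB ζ α hζ0 hT'
    · intro ξ β hξ hT
      set ζ : ℕ → D := fun n => ⟨q (ξ n : H), hqD (ξ n)⟩ with hζdef
      have hζ0 : Tendsto (fun n => ((ζ n : H))) atTop (𝓝 0) := by
        have := (q.continuous.tendsto 0).comp hξ
        rw [map_zero] at this; exact this
      have heq : ∀ n, (A + B) (ζ n) = B (ξ n) := by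
        intro n
        have hAz : A (ζ n) = 0 := by
          have h1 := hA (ζ n)
          have h2 : p ((ζ n : D) : H) = 0 := by
            have : (p.comp q) ((ξ n : H)) = 0 := by rw [hpq]; simp
            simpa using this
          have h3 : (⟨p ((ζ n : D) : H), hpD (ζ n)⟩ : D) = 0 := by
            apply Subtype.ext; simpa using h2
          rw [h1, h3, map_zero]
        have hBz : B (ζ n) = B (ξ n) := (hB (ξ n)).symm
        simp [LinearMap.add_apply, hAz, hBz]
      have hT' : Tendsto (fun n => (A + B) (ζ n)) atTop (𝓝 β) := by
        simpa [heq] using hT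
      exact hAB ζ β hζ0 hT'
  · rintro ⟨hclA, hclB⟩ ξ η hξ hT
    have hkey : ∀ ζ : D, ‖A ζ‖ ^ 2 + ‖B ζ‖ ^ 2 = ‖A ζ + B ζ‖ ^ 2 := by
      intro ζ
      have h := norm_add_sq (𝕜 := ℂ) (A ζ) (B ζ)
      rw [horth ζ ζ] at h
      simp at h
      linarith
    have hkA : ∀ ζ : D, ‖A ζ‖ ≤ ‖A ζ + B ζ‖ := by
      intro ζ
      have h := hkey ζ
      nlinarith [norm_nonneg (A ζ), norm_nonneg (B ζ), norm_nonneg (A ζ + B ζ), sq_nonneg (‖B ζ‖)]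
    have hkB : ∀ ζ : D, ‖B ζ‖ ≤ ‖A ζ + B ζ‖ := by
      intro ζ
      have h := hkey ζ
      nlinarith [norm_nonneg (A ζ), norm_nonneg (B ζ), norm_nonneg (A ζ + B ζ)]
    have hc : CauchySeq (fun n => A (ξ n) + B (ξ n)) := by
      have : CauchySeq (fun n => (A + B) (ξ n)) := hT.cauchySeq
      simpa [LinearMap.add_apply] using this
    have hcA : CauchySeq (fun n => A (ξ n)) := by
      rw [Metric.cauchySeq_iff] at hc ⊢
      intro ε hε
      obtain ⟨N, hN⟩ := hc ε hε
      refine ⟨N, fun m hm n hn => lt_of_le_of_lt ?_ (hN m hm n hn)⟩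
      rw [dist_eq_norm, dist_eq_norm]
      have : A (ξ m) - A (ξ n) = A (ξ m - ξ n) := (map_sub A _ _).symm
      rw [this]
      have h2 : (A (ξ m) + B (ξ m)) - (A (ξ n) + B (ξ n)) = A (ξ m - ξ n) + B (ξ m - ξ n) := by
        rw [map_sub A, map_sub B]; abel
      rw [h2]
      exact hkA _
    have hcB : CauchySeq (fun n => B (ξ n)) := by
      rw [Metric.cauchySeq_iff] at hc ⊢
      intro ε hε
      obtain ⟨N, hN⟩ := hc ε hε
      refine ⟨N, fun m hm n hn => lt_of_le_of_lt ?_ (hN m hm n hn)⟩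
      rw [dist_eq_norm, dist_eq_norm]
      have : B (ξ m) - B (ξ n) = B (ξ m - ξ n) := (map_sub B _ _).symm
      rw [this]
      have h2 : (A (ξ m) + B (ξ m)) - (A (ξ n) + B (ξ n)) = A (ξ m - ξ n) + B (ξ m - ξ n) := by
        rw [map_sub A, map_sub B]; abel
      rw [h2]
      exact hkB _
    obtain ⟨α, hα⟩ := cauchySeq_tendsto_of_complete hcA
    obtain ⟨β, hβ⟩ := cauchySeq_tendsto_of_complete hcB
    have hsum : Tendsto (fun n => A (ξ n) + B (ξ n)) atTop (𝓝 (α + β)) := hα.add hβ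
    have hη : η = α + β := by
      refine tendsto_nhds_unique ?_ hsum
      simpa [LinearMap.add_apply] using hT
    have hα0 : α = 0 := hclA ξ α hξ hα
    have hβ0 : β = 0 := hclB ξ β hξ hβ
    rw [hη, hα0, hβ0, add_zero]
end

section
/- Let T be a closed densely defined operator on a Hilbert space H, T' a closed densely defined operator on a Hilbert space H', and G : H → H' a bounded isometry (G*G = 1). Assume G·T ⊆ T'·G (i.e., for ξ ∈ dom(T), Gξ ∈ dom(T') and GTξ = T'Gξ) and G*·T' ⊆ T·G*. Then G·T = T'·G; that is, for every ξ ∈ H, Gξ ∈ dom(T') implies ξ ∈ dom(T), and then T'Gξ = GTξ. -/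
open Filter Topology

/-- An operator `T` with domain `D` is closed if its graph is closed. -/
def IsClosedOp {H H' : Type*} [NormedAddCommGroup H] [NormedSpace ℂ H]
    [NormedAddCommGroup H'] [NormedSpace ℂ H']
    (D : Submodule ℂ H) (T : D →ₗ[ℂ] H') : Prop :=
  IsClosed {pr : H × H' | ∃ h : pr.1 ∈ D, T ⟨pr.1, h⟩ = pr.2}

/-- If `T, T'` are closed densely defined operators, `G` is a bounded isometry with
`G·T ⊆ T'·G` and `G*·T' ⊆ T·G*`, then `G·T = T'·G`: whenever `Gξ ∈ dom T'`, already
`ξ ∈ dom T` and `T'Gξ = GTξ`. -/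
theorem stmt_11 {H H' : Type*}
    [NormedAddCommGroup H] [InnerProductSpace ℂ H] [CompleteSpace H]
    [NormedAddCommGroup H'] [InnerProductSpace ℂ H'] [CompleteSpace H']
    (DT : Submodule ℂ H) (hDT : Dense (DT : Set H))
    (DT' : Submodule ℂ H') (hDT' : Dense (DT' : Set H'))
    (T : DT →ₗ[ℂ] H) (T' : DT' →ₗ[ℂ] H')
    (hTc : IsClosedOp DT T) (hT'c : IsClosedOp DT' T')
    (G : H →L[ℂ] H') (hG : ∀ x : H, ‖G x‖ = ‖x‖)
    (hmem : ∀ ξ : DT, G (ξ : H) ∈ DT')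
    (heq : ∀ ξ : DT, G (T ξ) = T' ⟨G (ξ : H), hmem ξ⟩)
    (hmem' : ∀ η : DT', ContinuousLinearMap.adjoint G (η : H') ∈ DT)
    (heq' : ∀ η : DT', ContinuousLinearMap.adjoint G (T' η) =
      T ⟨ContinuousLinearMap.adjoint G (η : H'), hmem' η⟩) :
    ∀ (ξ : H) (h : G ξ ∈ DT'), ∃ hξ : ξ ∈ DT, G (T ⟨ξ, hξ⟩) = T' ⟨G ξ, h⟩ := by
  have hGG : ∀ x : H, ContinuousLinearMap.adjoint G (G x) = x := by
    intro x
    apply ext_inner_right ℂ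
    intro y
    rw [ContinuousLinearMap.adjoint_inner_left]
    exact LinearIsometry.inner_map_map ⟨G.toLinearMap, hG⟩ x y
  intro ξ h
  have hξ : ξ ∈ DT := by
    have := hmem' ⟨G ξ, h⟩
    simpa [hGG] using this
  exact ⟨hξ, heq ⟨ξ, hξ⟩⟩
end

section
/- Let M be a von Neumann algebra on a Hilbert space H with commutant M', and Ω ∈ H a cyclic and separating vector for M. Let Δ and J be the modular operator and modular conjugation of (M, Ω), and S = JΔ^{1/2}, F = S* the closed Tomita operators, so that S has core MΩ with SxΩ = x*Ω for x ∈ M, and F has core M'Ω with FyΩ = y*Ω for y ∈ M'. For ξ ∈ H, define the operator L(ξ) with domain M'Ω by L(ξ)yΩ = yξ for y ∈ M'. Then the following are equivalent: (a) Ω ∈ dom(L(ξ)*); (b) ξ ∈ dom(Δ^{1/2}). Moreover, if either holds, then L(ξ) is closable and Sξ = L(ξ)*Ω. -/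
open Filter Topology

private lemma aux_dense {H : Type*} [NormedAddCommGroup H] [InnerProductSpace ℂ H]
    [CompleteSpace H] (M : VonNeumannAlgebra H) (Ω : H)
    (hsep : ∀ x ∈ M, x Ω = 0 → x = 0) :
    ∀ χ : H, (∀ z ∈ M.commutant, (inner ℂ χ (z Ω) : ℂ) = 0) → χ = 0 := by
  set W : Submodule ℂ H :=
    { carrier := {v : H | ∃ y ∈ M.commutant, y Ω = v}
      add_mem' := by
        rintro a b ⟨y, hy, rfl⟩ ⟨z, hz, rfl⟩
        exact ⟨y + z, add_mem hy hz, by simp⟩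
      zero_mem' := ⟨0, zero_mem _, by simp⟩
      smul_mem' := by
        rintro c a ⟨y, hy, rfl⟩
        refine ⟨c • y, ?_, by simp⟩
        refine VonNeumannAlgebra.mem_commutant_iff.2 fun g hg => ?_
        have := VonNeumannAlgebra.mem_commutant_iff.1 hy g hg
        rw [mul_smul_comm, smul_mul_assoc, this] } with hW
  set K : Submodule ℂ H := W.topologicalClosure with hK
  haveI : CompleteSpace K := (W.isClosed_topologicalClosure).completeSpace_coe
  -- every y ∈ M' maps K into K
  have mapsK : ∀ y ∈ M.commutant, ∀ v ∈ K, y v ∈ K := by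
    intro y hy
    have hle : W ≤ K.comap (y : H →ₗ[ℂ] H) := by
      rintro v ⟨z, hz, rfl⟩
      have : y (z Ω) = (y * z) Ω := rfl
      refine Submodule.mem_comap.2 ?_
      rw [ContinuousLinearMap.coe_coe, this]
      exact W.le_topologicalClosure ⟨y * z, mul_mem hy hz, rfl⟩
    have hcl : IsClosed ((K.comap (y : H →ₗ[ℂ] H) : Submodule ℂ H) : Set H) := by
      have : ((K.comap (y : H →ₗ[ℂ] H) : Submodule ℂ H) : Set H) = y ⁻¹' (K : Set H) := rfl
      rw [this]
      exact (W.isClosed_topologicalClosure).preimage y.continuous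
    intro v hv
    exact Submodule.mem_comap.1 (W.topologicalClosure_minimal hle hcl hv)
  -- the orthogonal projection onto K
  set P : H →L[ℂ] H := K.subtypeL.comp (K.orthogonalProjectionOnto) with hP
  have hPapp : ∀ v : H, P v = (K.orthogonalProjectionOnto v : H) := fun _ => rfl
  have hPK : ∀ v : H, P v ∈ K := fun v => (K.orthogonalProjectionOnto v).2
  -- P commutes with every y ∈ M'
  have hcomm : ∀ y ∈ M.commutant, ∀ v : H, P (y v) = y (P v) := by
    intro y hy v
    rw [hPapp, hPapp]
    refine Submodule.eq_starProjection_of_mem_orthogonal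
      (mapsK y hy _ (hPK v)) ?_
    have hsub : v - (K.orthogonalProjectionOnto v : H) ∈ Kᗮ :=
      Submodule.sub_starProjection_mem_orthogonal v
    have : y v - y ((K.orthogonalProjectionOnto v : H)) = y (v - (K.orthogonalProjectionOnto v : H)) := by
      simp [map_sub]
    rw [this]
    intro u hu
    have h1 : (inner ℂ ((ContinuousLinearMap.adjoint y) u)
        (v - (K.orthogonalProjectionOnto v : H)) : ℂ) = inner ℂ u (y (v - (K.orthogonalProjectionOnto v : H))) :=
      ContinuousLinearMap.adjoint_inner_left y _ u
    rw [← h1]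
    have hstar : ContinuousLinearMap.adjoint y ∈ M.commutant := by
      rw [← ContinuousLinearMap.star_eq_adjoint]
      exact star_mem hy
    exact hsub _ (mapsK _ hstar u hu)
  -- P ∈ M
  have hPmem : P ∈ M := by
    rw [← M.commutant_commutant]
    refine VonNeumannAlgebra.mem_commutant_iff.2 fun y hy => ?_
    ext v
    simp only [ContinuousLinearMap.mul_apply]
    exact (hcomm y hy v).symm
  -- Ω ∈ K
  have hΩK : Ω ∈ K := W.le_topologicalClosure ⟨1, one_mem _, by simp⟩
  have hPΩ : P Ω = Ω := by
    rw [hPapp]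
    exact Submodule.starProjection_eq_self_iff.2 hΩK
  have h1P : (1 : H →L[ℂ] H) - P = 0 := by
    refine hsep _ (sub_mem (one_mem _) hPmem) ?_
    simp [hPΩ]
  have hPone : P = 1 := by
    have := sub_eq_zero.1 h1P
    exact this.symm
  have hdense : Dense (W : Set H) := by
    intro v
    have hv : v ∈ K := by
      have := hPK v
      rwa [hPone, ContinuousLinearMap.one_apply] at this
    rw [← Submodule.topologicalClosure_coe]; exact hv
  intro χ hχ
  refine hdense.eq_zero_of_inner_left ℂ fun v hv' => ?_
  obtain ⟨z, hz, hzv⟩ := hv'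
  rw [← hzv]
  exact hχ z hz

/-- Tomita–Takesaki theory: let `M` be a von Neumann algebra with cyclic separating
vector `Ω`, let `S` (with domain `DS = dom Δ^{1/2}`) and `F = S*` (with domain `DF`)
be the closed antilinear Tomita operators, so that `S` has core `MΩ` with `S xΩ = x*Ω`
and `F` has core `M'Ω` with `F yΩ = y*Ω`.  For `ξ ∈ H`, let `L(ξ)` be the operator
with domain `M'Ω` given by `L(ξ) yΩ = yξ`.  Then `Ω ∈ dom (L(ξ)*)` iff
`ξ ∈ dom Δ^{1/2} = DS`, and in that case `L(ξ)` is closable and `S ξ = L(ξ)* Ω`. -/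
theorem stmt_13 {H : Type*} [NormedAddCommGroup H] [InnerProductSpace ℂ H] [CompleteSpace H]
    (M : VonNeumannAlgebra H) (Ω : H)
    (hcyc : Dense {ξ : H | ∃ x ∈ M, x Ω = ξ})
    (hsep : ∀ x ∈ M, x Ω = 0 → x = 0)
    (DS DF : Submodule ℂ H)
    (S : DS →ₛₗ[starRingEnd ℂ] H) (F : DF →ₛₗ[starRingEnd ℂ] H)
    -- `S xΩ = x*Ω` for `x ∈ M`
    (hSmem : ∀ x ∈ M, x Ω ∈ DS)
    (hSval : ∀ x, ∀ hx : x ∈ M, S ⟨x Ω, hSmem x hx⟩ = (star x) Ω)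
    -- `F yΩ = y*Ω` for `y ∈ M'`
    (hFmem : ∀ y ∈ M.commutant, y Ω ∈ DF)
    (hFval : ∀ y, ∀ hy : y ∈ M.commutant, F ⟨y Ω, hFmem y hy⟩ = (star y) Ω)
    -- `MΩ` is a core for `S`
    (hScore : ∀ (ξ : DS) (ε : ℝ), 0 < ε →
      ∃ x ∈ M, ‖x Ω - (ξ : H)‖ < ε ∧ ‖(star x) Ω - S ξ‖ < ε)
    -- `M'Ω` is a core for `F`
    (hFcore : ∀ (η : DF) (ε : ℝ), 0 < ε →
      ∃ y ∈ M.commutant, ‖y Ω - (η : H)‖ < ε ∧ ‖(star y) Ω - F η‖ < ε)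
    -- `S` and `F` are closed
    (hSclosed : ∀ (ξ : ℕ → DS) (ζ η : H),
      Tendsto (fun n => ((ξ n : H))) atTop (𝓝 ζ) → Tendsto (fun n => S (ξ n)) atTop (𝓝 η) →
      ∃ h : ζ ∈ DS, S ⟨ζ, h⟩ = η)
    (hFclosed : ∀ (η : ℕ → DF) (ζ χ : H),
      Tendsto (fun n => ((η n : H))) atTop (𝓝 ζ) → Tendsto (fun n => F (η n)) atTop (𝓝 χ) →
      ∃ h : ζ ∈ DF, F ⟨ζ, h⟩ = χ)
    -- `F = S*` and `S = F*` (mutually adjoint antilinear operators)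
    (hadj : ∀ (ξ : DS) (η : DF), (inner ℂ (S ξ) ((η : H)) : ℂ) = inner ℂ (F η) ((ξ : H)))
    (hFmax : ∀ η ζ : H, (∀ ξ : DS, (inner ℂ (S ξ) η : ℂ) = inner ℂ ζ ((ξ : H))) →
      ∃ h : η ∈ DF, F ⟨η, h⟩ = ζ)
    (hSmax : ∀ ξ ζ : H, (∀ η : DF, (inner ℂ (F η) ξ : ℂ) = inner ℂ ζ ((η : H))) →
      ∃ h : ξ ∈ DS, S ⟨ξ, h⟩ = ζ)
    (ξ : H) :
    -- (a) `Ω ∈ dom L(ξ)*` ↔ (b) `ξ ∈ dom Δ^{1/2} = DS`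
    ((∃ ζ : H, ∀ y ∈ M.commutant, (inner ℂ (y ξ) Ω : ℂ) = inner ℂ (y Ω) ζ) ↔ ξ ∈ DS) ∧
    -- and if so, `L(ξ)` is closable and `S ξ = L(ξ)* Ω`
    (∀ hξ : ξ ∈ DS,
      (∀ y : ℕ → (H →L[ℂ] H), (∀ n, y n ∈ M.commutant) →
        Tendsto (fun n => (y n) Ω) atTop (𝓝 0) →
        ∀ χ : H, Tendsto (fun n => (y n) ξ) atTop (𝓝 χ) → χ = 0) ∧
      (∀ y ∈ M.commutant, (inner ℂ (y ξ) Ω : ℂ) = inner ℂ (y Ω) (S ⟨ξ, hξ⟩))) := by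
  -- the key relation: if `ξ ∈ DS`, then `⟪yξ, Ω⟫ = ⟪yΩ, Sξ⟫` for all `y ∈ M'`
  have key : ∀ hξ : ξ ∈ DS, ∀ y ∈ M.commutant,
      (inner ℂ (y ξ) Ω : ℂ) = inner ℂ (y Ω) (S ⟨ξ, hξ⟩) := by
    intro hξ y hy
    have h1 := hadj ⟨ξ, hξ⟩ ⟨y Ω, hFmem y hy⟩
    rw [hFval y hy] at h1
    -- h1 : ⟪S⟨ξ,hξ⟩, yΩ⟫ = ⟪(star y) Ω, ξ⟫
    have h2 : (inner ℂ (y ξ) Ω : ℂ) = inner ℂ ξ ((star y) Ω) := by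
      rw [ContinuousLinearMap.star_eq_adjoint]
      exact (ContinuousLinearMap.adjoint_inner_right y ξ Ω).symm
    have h3 : (inner ℂ (y Ω) (S ⟨ξ, hξ⟩) : ℂ) = inner ℂ ξ ((star y) Ω) := by
      rw [← inner_conj_symm, h1, inner_conj_symm]
    rw [h2, h3]
  constructor
  · constructor
    · rintro ⟨ζ, hζ⟩
      -- show `⟪Fη, ξ⟫ = ⟪ζ, η⟫` for every `η ∈ DF`, and apply maximality
      have hyrel : ∀ y ∈ M.commutant, (inner ℂ ((star y) Ω) ξ : ℂ) = inner ℂ ζ (y Ω) := by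
        intro y hy
        have h2 : (inner ℂ (y ξ) Ω : ℂ) = inner ℂ ξ ((star y) Ω) := by
          rw [ContinuousLinearMap.star_eq_adjoint]
          exact (ContinuousLinearMap.adjoint_inner_right y ξ Ω).symm
        rw [← inner_conj_symm, ← h2, hζ y hy, inner_conj_symm]
      have hmain : ∀ η : DF, (inner ℂ (F η) ξ : ℂ) = inner ℂ ζ ((η : H)) := by
        intro η
        set a : ℂ := inner ℂ (F η) ξ with ha
        set b : ℂ := inner ℂ ζ ((η : H)) with hb
        have hbound : ∀ ε : ℝ, 0 < ε → ‖a - b‖ ≤ ε * (‖ξ‖ + ‖ζ‖) := by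
          intro ε hε
          obtain ⟨y, hy, h1, h2⟩ := hFcore η ε hε
          have e1 : a - b = inner ℂ (F η - (star y) Ω) ξ + inner ℂ ζ ((y Ω) - (η : H)) := by
            rw [inner_sub_left, inner_sub_right, hyrel y hy, ha, hb]
            ring
          calc ‖a - b‖ ≤ ‖(inner ℂ (F η - (star y) Ω) ξ : ℂ)‖ + ‖(inner ℂ ζ ((y Ω) - (η : H)) : ℂ)‖ := by
                rw [e1]; exact norm_add_le _ _
            _ ≤ ‖F η - (star y) Ω‖ * ‖ξ‖ + ‖ζ‖ * ‖y Ω - (η : H)‖ :=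
                add_le_add (norm_inner_le_norm _ _) (norm_inner_le_norm _ _)
            _ ≤ ε * ‖ξ‖ + ‖ζ‖ * ε := by
                have h2' : ‖F η - (star y) Ω‖ ≤ ε := by
                  rw [norm_sub_rev]; exact h2.le
                gcongr
            _ = ε * (‖ξ‖ + ‖ζ‖) := by ring
        have hlt : ∀ δ : ℝ, 0 < δ → ‖a - b‖ < δ := by
          intro δ hδ
          have hs : (0:ℝ) < ‖ξ‖ + ‖ζ‖ + 1 := by positivity
          have hε : (0:ℝ) < δ / (‖ξ‖ + ‖ζ‖ + 1) := by positivity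
          calc ‖a - b‖ ≤ (δ / (‖ξ‖ + ‖ζ‖ + 1)) * (‖ξ‖ + ‖ζ‖) := hbound _ hε
            _ < (δ / (‖ξ‖ + ‖ζ‖ + 1)) * (‖ξ‖ + ‖ζ‖ + 1) := by
                exact mul_lt_mul_of_pos_left (by linarith) hε
            _ = δ := div_mul_cancel₀ δ (ne_of_gt hs)
        have hz : a - b = 0 := by
          by_contra hne
          have : 0 < ‖a - b‖ := norm_pos_iff.2 hne
          exact lt_irrefl _ (hlt _ this)
        exact sub_eq_zero.1 hz
      exact (hSmax ξ ζ hmain).1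
    · intro hξ
      exact ⟨S ⟨ξ, hξ⟩, key hξ⟩
  · intro hξ
    refine ⟨?_, key hξ⟩
    intro y hy hΩ0 χ hχ
    refine aux_dense M Ω hsep χ ?_
    intro z hz
    have hn : ∀ n, (inner ℂ ((y n) ξ) (z Ω) : ℂ) = inner ℂ ((y n) Ω) (z (S ⟨ξ, hξ⟩)) := by
      intro n
      have h1 : (inner ℂ ((star z * y n) ξ) Ω : ℂ) = inner ℂ ((star z * y n) Ω) (S ⟨ξ, hξ⟩) :=
        key hξ _ (mul_mem (star_mem hz) (hy n))
      have e1 : (inner ℂ ((star z * y n) ξ) Ω : ℂ) = inner ℂ ((y n) ξ) (z Ω) := by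
        rw [ContinuousLinearMap.mul_apply, ContinuousLinearMap.star_eq_adjoint]
        exact ContinuousLinearMap.adjoint_inner_left z Ω ((y n) ξ)
      have e2 : (inner ℂ ((star z * y n) Ω) (S ⟨ξ, hξ⟩) : ℂ)
          = inner ℂ ((y n) Ω) (z (S ⟨ξ, hξ⟩)) := by
        rw [ContinuousLinearMap.mul_apply, ContinuousLinearMap.star_eq_adjoint]
        exact ContinuousLinearMap.adjoint_inner_left z (S ⟨ξ, hξ⟩) ((y n) Ω)
      rw [← e1, h1, e2]
    have t1 : Tendsto (fun n => (inner ℂ ((y n) ξ) (z Ω) : ℂ)) atTop (𝓝 (inner ℂ χ (z Ω))) :=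
      Filter.Tendsto.inner (𝕜 := ℂ) hχ tendsto_const_nhds
    have t2 : Tendsto (fun n => (inner ℂ ((y n) Ω) (z (S ⟨ξ, hξ⟩)) : ℂ)) atTop (𝓝 0) := by
      have := Filter.Tendsto.inner (𝕜 := ℂ) hΩ0 (tendsto_const_nhds (x := z (S ⟨ξ, hξ⟩)))
      simpa using this
    simp only [hn] at t1
    exact tendsto_nhds_unique t1 t2
end
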